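/- Let Ω ⊂ ℝ^n be a bounded open set satisfying the ρ-reflection property, and set r = (inf_{x ∈ ∂Ω} |x|² − ρ²)^{1/2} (well-defined since B_ρ(0) ⊂⊂ Ω). Then Ω is star-shaped with respect to the ball B_r(0), i.e., for every y ∈ B_r(0) and every x ∈ Ω, the segment from y to x is contained in Ω. -/

import Mathlib

open Metric

/-- Reflection across the hyperplane `{x : x·ν = s}` (for a unit vector `ν`). -/
noncomputable def reflectHyp (n : ℕ) (ν : EuclideanSpace ℝ (Fin n)) (s : ℝ)
    (x : EuclideanSpace ℝ (Fin n)) : EuclideanSpace ℝ (Fin n) :=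
  x - (2 * ((inner ℝ x ν : ℝ) - s)) • ν

/-- The `ρ`-reflection property. -/
def RhoReflection (n : ℕ) (ρ : ℝ) (Ω : Set (EuclideanSpace ℝ (Fin n))) : Prop :=
  closedBall (0 : EuclideanSpace ℝ (Fin n)) ρ ⊆ Ω ∧
    ∀ ν : EuclideanSpace ℝ (Fin n), ‖ν‖ = 1 → ∀ s : ℝ, ρ < s →
      reflectHyp n ν s '' (Ω ∩ {x | s < (inner ℝ x ν : ℝ)}) ⊆ Ω ∩ {x | (inner ℝ x ν : ℝ) < s}

/-- If a bounded open set `Ω` satisfies `ρ`-reflection and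
`r = (inf_{x ∈ ∂Ω} |x|² - ρ²)^{1/2}`, then `Ω` is star-shaped with respect to the
ball `B_r(0)`: for every `y ∈ B_r(0)` and every `x ∈ Ω` the segment `[y,x]` lies in `Ω`. -/
private lemma key_arith {ρ δ τ r ny nz iz : ℝ} (hρ : 0 < ρ) (hδ : 0 < δ) (hτ : 0 < τ)
    (h1 : 2 * (τ * iz) = nz - ny + (τ * δ) ^ 2) (h2 : r ^ 2 + ρ ^ 2 ≤ nz)
    (h3 : ny < r ^ 2) : ρ * δ < iz := by
  nlinarith [sq_nonneg (ρ - τ * δ), mul_pos hτ hδ]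

set_option maxHeartbeats 1000000 in
theorem rhoReflection_starShaped (n : ℕ) (ρ : ℝ) (hρ : 0 < ρ)
    (Ω : Set (EuclideanSpace ℝ (Fin n)))
    (hopen : IsOpen Ω) (hbdd : Bornology.IsBounded Ω)
    (hfr : (frontier Ω).Nonempty)
    (href : RhoReflection n ρ Ω)
    (r : ℝ) (hr : r = Real.sqrt (sInf ((fun x => ‖x‖ ^ 2) '' frontier Ω) - ρ ^ 2)) :
    ∀ y ∈ ball (0 : EuclideanSpace ℝ (Fin n)) r, ∀ x ∈ Ω, segment ℝ y x ⊆ Ω := by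
  intro y hy x hx p hp
  by_contra hpΩ
  have hy' : ‖y‖ < r := by simpa [mem_ball, dist_eq_norm] using hy
  have hr0 : 0 < r := lt_of_le_of_lt (norm_nonneg y) hy'
  set m := sInf ((fun x => ‖x‖ ^ 2) '' frontier Ω) with hm
  have hmρ : 0 < m - ρ ^ 2 := Real.sqrt_pos.mp (hr ▸ hr0)
  have hr2 : r ^ 2 = m - ρ ^ 2 := by rw [hr]; exact Real.sq_sqrt hmρ.le
  have hlow : ∀ z ∈ frontier Ω, m ≤ ‖z‖ ^ 2 := by
    intro z hz
    exact csInf_le ⟨0, by rintro v ⟨w, -, rfl⟩; positivity⟩ ⟨z, hz, rfl⟩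
  obtain ⟨a, b, ha, hb, hab, hpd⟩ := hp
  have hb' : b = 1 - a := by linarith
  subst hb'
  -- a ≠ 0 and x ≠ y
  have ha0 : a ≠ 0 := by
    rintro rfl
    exact hpΩ (by rw [← hpd]; simpa using hx)
  have hxy : x ≠ y := by
    intro h
    apply hpΩ
    rw [← hpd, h, ← add_smul, hab, one_smul, ← h]
    exact hx
  have ha1 : a ≤ 1 := by linarith
  -- the path from x to p
  set f : ℝ → EuclideanSpace ℝ (Fin n) := fun t => x + t • (p - x) with hf_def
  have hf : Continuous f := by fun_prop
  set C : Set ℝ := Set.Icc (0:ℝ) 1 ∩ f ⁻¹' Ωᶜ with hC_def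
  have hCclosed : IsClosed C := isClosed_Icc.inter (hopen.isClosed_compl.preimage hf)
  have hC1 : (1:ℝ) ∈ C := ⟨⟨zero_le_one, le_refl 1⟩, by simp [f, hpΩ]⟩
  have hCbdd : BddBelow C := ⟨0, fun t ht => ht.1.1⟩
  set t₀ : ℝ := sInf C with ht₀_def
  have ht₀C : t₀ ∈ C := hCclosed.csInf_mem ⟨1, hC1⟩ hCbdd
  set z : EuclideanSpace ℝ (Fin n) := f t₀ with hz_def
  have hzΩ : z ∉ Ω := ht₀C.2
  have ht₀pos : 0 < t₀ := by
    rcases lt_or_eq_of_le ht₀C.1.1 with h | h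
    · exact h
    · exfalso; apply hzΩ; rw [hz_def, ← h]; simpa [f] using hx
  have hbelow : ∀ t, 0 ≤ t → t < t₀ → f t ∈ Ω := by
    intro t h0 hlt
    by_contra hn
    exact absurd (csInf_le hCbdd ⟨⟨h0, hlt.le.trans ht₀C.1.2⟩, hn⟩) (not_le.2 hlt)
  -- z is a frontier point
  have hzcl : z ∈ closure Ω := by
    have h1 : z ∈ f '' closure (Set.Ico 0 t₀) := by
      rw [closure_Ico (ne_of_lt ht₀pos)]
      exact ⟨t₀, Set.right_mem_Icc.2 ht₀pos.le, rfl⟩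
    have h2 : f '' Set.Ico 0 t₀ ⊆ Ω := by
      rintro - ⟨t, ⟨h0, hlt⟩, rfl⟩; exact hbelow t h0 hlt
    exact closure_mono h2 (image_closure_subset_closure_image hf h1)
  have hzfr : z ∈ frontier Ω := by
    rw [frontier, hopen.interior_eq]; exact ⟨hzcl, hzΩ⟩
  have hz2 : r ^ 2 + ρ ^ 2 ≤ ‖z‖ ^ 2 := by have := hlow z hzfr; linarith
  -- direction
  set d : EuclideanSpace ℝ (Fin n) := x - y with hd_def
  have hd0 : d ≠ 0 := sub_ne_zero.2 hxy
  set δ : ℝ := ‖d‖ with hδ_def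
  have hδ : 0 < δ := norm_pos_iff.2 hd0
  set τ : ℝ := 1 - t₀ * a with hτ_def
  have hzval : z = y + τ • d := by
    rw [hz_def, hf_def, hd_def, hτ_def, ← hpd]
    module
  have hzy : z ≠ y := by
    intro h
    rw [h] at hz2
    nlinarith [norm_nonneg y]
  have hτ0 : τ ≠ 0 := by
    intro h
    apply hzy
    rw [hzval, h, zero_smul, add_zero]
  have hτpos : 0 < τ := by
    rcases lt_or_eq_of_le (by nlinarith [ht₀C.1.2, ht₀C.1.1] : (0:ℝ) ≤ τ) with h | h
    · exact h
    · exact absurd h.symm hτ0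
  -- key inner product inequality
  set iz : ℝ := inner ℝ z d with hiz_def
  have hzsuby : z - y = τ • d := by rw [hzval]; abel
  have hA : τ * iz = ‖z‖ ^ 2 - (inner ℝ z y : ℝ) := by
    have : (inner ℝ z (z - y) : ℝ) = (inner ℝ z z : ℝ) - (inner ℝ z y : ℝ) := inner_sub_right z z y
    rw [hzsuby, real_inner_smul_right, real_inner_self_eq_norm_sq] at this
    linarith [this]
  have hB : ‖z - y‖ ^ 2 = ‖z‖ ^ 2 - 2 * (inner ℝ z y : ℝ) + ‖y‖ ^ 2 := norm_sub_sq_real z y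
  have hC2 : ‖z - y‖ = τ * δ := by
    rw [hzsuby, norm_smul, Real.norm_eq_abs, abs_of_pos hτpos, hδ_def]
  have hkey : ρ * δ < iz := by
    rw [hC2] at hB
    exact key_arith (ny := ‖y‖ ^ 2) hρ hδ hτpos (by linarith) hz2
      (by nlinarith [norm_nonneg y])
  -- the unit direction
  set ν : EuclideanSpace ℝ (Fin n) := δ⁻¹ • d with hν_def
  have hν : ‖ν‖ = 1 := by
    rw [hν_def, norm_smul, Real.norm_eq_abs, abs_of_pos (inv_pos.2 hδ), ← hδ_def]
    field_simp
  have hzν : (inner ℝ z ν : ℝ) = δ⁻¹ * iz := by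
    rw [hν_def, real_inner_smul_right, hiz_def]
  have hzνρ : ρ < (inner ℝ z ν : ℝ) := by
    rw [hzν]
    rw [show ρ = δ⁻¹ * (ρ * δ) by field_simp]
    exact (mul_lt_mul_iff_right₀ (inv_pos.2 hδ)).2 hkey
  -- the interior point just beyond z
  have ha' : 0 < a := lt_of_le_of_ne ha (Ne.symm ha0)
  set e : ℝ := t₀ * a / 2 with he_def
  have he : 0 < e := by positivity
  set w : EuclideanSpace ℝ (Fin n) := f (t₀ / 2) with hw_def
  have hwΩ : w ∈ Ω := hbelow (t₀ / 2) (by linarith) (by linarith)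
  have hed : (e * δ) • ν = e • d := by
    rw [hν_def, smul_smul]
    congr 1
    field_simp
  have hwval : w = z + (e * δ) • ν := by
    rw [hed, hw_def, hz_def, hf_def, hd_def, he_def, ← hpd]
    module
  have hwν : (inner ℝ w ν : ℝ) = (inner ℝ z ν : ℝ) + e * δ := by
    rw [hwval, inner_add_left, real_inner_smul_left, real_inner_self_eq_norm_sq, hν, one_pow,
      mul_one]
  -- the reflection
  set s : ℝ := (inner ℝ z ν : ℝ) + e * δ / 2 with hs_def
  have hs : ρ < s := by rw [hs_def]; nlinarith [mul_pos he hδ]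
  have hws : s < (inner ℝ w ν : ℝ) := by rw [hwν, hs_def]; nlinarith [mul_pos he hδ]
  have hrefl : reflectHyp n ν s w = z := by
    rw [reflectHyp, hwν, hs_def, hwval]
    rw [show 2 * ((inner ℝ z ν : ℝ) + e * δ - ((inner ℝ z ν : ℝ) + e * δ / 2)) = e * δ by ring]
    abel
  have : z ∈ Ω ∩ {u | (inner ℝ u ν : ℝ) < s} := by
    apply href.2 ν hν s hs
    exact ⟨w, ⟨hwΩ, hws⟩, hrefl⟩
  exact hzΩ this.1
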